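/- Let (M_0, …, M_d) be a matryoshka sequence for H and k, with d = d(H). Then the hypergraph K = (M_0 ⊖ M_1) ∪ … ∪ (M_{d-1} ⊖ M_d) ∪ M_d has at most ∑_{i=0}^{d} k^i · i! hyperedges. -/

import Mathlib

/-- A sunflower with core `C`. -/
def IsSunflower {V : Type*} [DecidableEq V] (S : Finset (Finset V)) (C : Finset V) : Prop :=
  (∀ p ∈ S, C ⊂ p) ∧ ∀ p ∈ S, ∀ q ∈ S, p ≠ q → p ∩ q = C

/-- `X` is a hitting set of the hypergraph with edge set `E`. -/
def HitsAllF {V : Type*} [DecidableEq V] (X : Finset V) (E : Finset (Finset V)) : Prop :=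
  ∀ e ∈ E, (e ∩ X).Nonempty

/-- `A ⊖ B`: the edges of `A` that contain no edge of `B` as a subset. -/
def OminusF {V : Type*} [DecidableEq V] (A B : Finset (Finset V)) : Finset (Finset V) :=
  A.filter fun e => ∀ e' ∈ B, ¬ e' ⊆ e

/-- The Sunflower Lemma bound: a family of nonempty sets, each of size at most `n`,
containing no sunflower with more than `k` petals, has at most `k^n * n!` members. -/
lemma sunflower_free_card_le {V : Type*} [DecidableEq V] (k : ℕ) :
    ∀ n (F : Finset (Finset V)),
      (∀ e ∈ F, e.Nonempty) → (∀ e ∈ F, e.card ≤ n) →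
      (∀ S : Finset (Finset V), S ⊆ F → ∀ C, IsSunflower S C → S.card ≤ k) →
      F.card ≤ k ^ n * n.factorial := by
  intro n
  induction n with
  | zero =>
    intro F hne hcard _
    have hF : F = ∅ := by
      rcases F.eq_empty_or_nonempty with h | ⟨e, he⟩
      · exact h
      · exact absurd (Finset.card_pos.mpr (hne e he)) (by have := hcard e he; omega)
    simp [hF]
  | succ n ih =>
    intro F hne hcard hsf
    have hdisj1 : ∀ p q : Finset V, p.card = 1 → q.card = 1 → p ≠ q → p ∩ q = ∅ := by
      intro p q hp hq hpq
      obtain ⟨a, rfl⟩ := Finset.card_eq_one.mp hp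
      obtain ⟨b, rfl⟩ := Finset.card_eq_one.mp hq
      have hab : a ≠ b := fun h => hpq (by rw [h])
      exact Finset.singleton_inter_of_notMem (by simp [hab])
    rcases Nat.eq_zero_or_pos k with rfl | hk
    · -- k = 0 : F must be empty
      rcases F.eq_empty_or_nonempty with h | ⟨e, he⟩
      · simp [h]
      · exfalso
        have h1 : IsSunflower {e} ∅ := by
          constructor
          · intro p hp
            rw [Finset.mem_singleton] at hp
            rw [hp]
            exact Finset.empty_ssubset.mpr (hne e he)
          · intro p hp q hq hpq
            rw [Finset.mem_singleton] at hp hq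
            exact absurd (hp.trans hq.symm) hpq
        have := hsf {e} (Finset.singleton_subset_iff.mpr he) ∅ h1
        simp at this
    by_cases hn0 : n = 0
    · -- all sets are singletons, pairwise disjoint, hence a sunflower with core ∅
      subst hn0
      have hall : ∀ p ∈ F, ∀ q ∈ F, p ≠ q → p ∩ q = ∅ := by
        intro p hp q hq hpq
        have h1 : p.card = 1 := le_antisymm (hcard p hp) (Finset.card_pos.mpr (hne p hp))
        have h2 : q.card = 1 := le_antisymm (hcard q hq) (Finset.card_pos.mpr (hne q hq))
        exact hdisj1 p q h1 h2 hpq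
      have := hsf F Finset.Subset.rfl ∅
        ⟨fun p hp => Finset.empty_ssubset.mpr (hne p hp), hall⟩
      simpa using this
    have hn : 1 ≤ n := Nat.one_le_iff_ne_zero.mpr hn0
    -- singletons of F
    set Sing := F.filter (fun e => e.card = 1) with hSingdef
    have hSingF : Sing ⊆ F := Finset.filter_subset _ _
    have hSingDisj : ∀ p ∈ Sing, ∀ q ∈ Sing, p ≠ q → p ∩ q = ∅ := fun p hp q hq =>
      hdisj1 p q (Finset.mem_filter.mp hp).2 (Finset.mem_filter.mp hq).2
    have hSingk : Sing.card ≤ k := hsf Sing hSingF ∅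
      ⟨fun p hp => Finset.empty_ssubset.mpr (hne p (hSingF hp)), hSingDisj⟩
    -- a maximal pairwise disjoint subfamily containing all singletons
    set Pfam := F.powerset.filter
      (fun D => Sing ⊆ D ∧ ∀ p ∈ D, ∀ q ∈ D, p ≠ q → p ∩ q = ∅) with hPfamdef
    have hSingMem : Sing ∈ Pfam :=
      Finset.mem_filter.mpr ⟨Finset.mem_powerset.mpr hSingF, Finset.Subset.rfl, hSingDisj⟩
    obtain ⟨D, hDmem, hDmax⟩ := Pfam.exists_max_image Finset.card ⟨Sing, hSingMem⟩
    have hDF : D ⊆ F := Finset.mem_powerset.mp (Finset.mem_filter.mp hDmem).1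
    have hSingD : Sing ⊆ D := (Finset.mem_filter.mp hDmem).2.1
    have hDdisj : ∀ p ∈ D, ∀ q ∈ D, p ≠ q → p ∩ q = ∅ := (Finset.mem_filter.mp hDmem).2.2
    have hDk : D.card ≤ k := hsf D hDF ∅
      ⟨fun p hp => Finset.empty_ssubset.mpr (hne p (hDF hp)), hDdisj⟩
    set A := D.biUnion id with hAdef
    -- every edge meets A
    have hhitA : ∀ e ∈ F, (e ∩ A).Nonempty := by
      intro e he
      by_contra hcon
      rw [Finset.not_nonempty_iff_eq_empty] at hcon
      have heD : e ∉ D := by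
        intro hd
        have hsub : e ⊆ A := Finset.subset_biUnion_of_mem id hd
        have h1 : e ∩ A = e := Finset.inter_eq_left.mpr hsub
        rw [h1] at hcon
        exact (hne e he).ne_empty hcon
      have hmem : insert e D ∈ Pfam := by
        refine Finset.mem_filter.mpr ⟨Finset.mem_powerset.mpr (Finset.insert_subset he hDF),
          hSingD.trans (Finset.subset_insert _ _), ?_⟩
        intro p hp q hq hpq
        rcases Finset.mem_insert.mp hp with rfl | hp' <;>
          rcases Finset.mem_insert.mp hq with h | hq'
        · exact absurd h.symm hpq
        · have h2 : p ∩ q ⊆ p ∩ A :=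
            Finset.inter_subset_inter (Finset.Subset.refl p) (Finset.subset_biUnion_of_mem id hq')
          rw [hcon] at h2
          exact Finset.subset_empty.mp h2
        · subst h
          have h2 : q ∩ p ⊆ q ∩ A :=
            Finset.inter_subset_inter (Finset.Subset.refl q) (Finset.subset_biUnion_of_mem id hp')
          rw [hcon] at h2
          rw [Finset.inter_comm]
          exact Finset.subset_empty.mp h2
        · exact hDdisj p hp' q hq' hpq
      have := hDmax _ hmem
      rw [Finset.card_insert_of_notMem heD] at this
      omega
    -- bound on |A|
    have hAcard : A.card ≤ Sing.card + (k - Sing.card) * (n + 1) := by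
      have h1 : A.card ≤ ∑ d' ∈ D, d'.card := Finset.card_biUnion_le
      have h2 : ∑ d' ∈ D \ Sing, d'.card + ∑ d' ∈ Sing, d'.card = ∑ d' ∈ D, d'.card :=
        Finset.sum_sdiff hSingD
      have h3 : ∑ d' ∈ Sing, d'.card = Sing.card := by
        rw [Finset.sum_congr rfl (fun d' hd' => (Finset.mem_filter.mp hd').2)]
        simp
        rfl
      have h4 : ∑ d' ∈ D \ Sing, d'.card ≤ (D \ Sing).card * (n + 1) :=
        Finset.sum_le_card_nsmul _ _ _
          (fun d' hd' => hcard d' (hDF (Finset.mem_sdiff.mp hd').1))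
      have h5 : (D \ Sing).card ≤ k - Sing.card := by
        rw [Finset.card_sdiff_of_subset hSingD]
        omega
      have h6 : (D \ Sing).card * (n + 1) ≤ (k - Sing.card) * (n + 1) :=
        Nat.mul_le_mul_right _ h5
      calc A.card ≤ ∑ d' ∈ D, d'.card := h1
        _ = ∑ d' ∈ D \ Sing, d'.card + Sing.card := by rw [← h2, h3]
        _ ≤ (k - Sing.card) * (n + 1) + Sing.card := add_le_add_left (h4.trans h6) _
        _ = Sing.card + (k - Sing.card) * (n + 1) := add_comm _ _
    -- per-vertex bound via induction hypothesis
    have hxbound : ∀ x ∈ A,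
        (F.filter (fun e => x ∈ e ∧ e ≠ ({x} : Finset V))).card ≤ k ^ n * n.factorial := by
      intro x _
      set Fx := (F.filter (fun e => x ∈ e ∧ e ≠ ({x} : Finset V))).image
        (fun e => e.erase x) with hFxdef
      have hinj : Set.InjOn (fun e => Finset.erase e x)
          ↑(F.filter (fun e => x ∈ e ∧ e ≠ ({x} : Finset V))) := by
        intro a ha b hb hab
        have hxa : x ∈ a := (Finset.mem_filter.mp (Finset.mem_coe.mp ha)).2.1
        have hxb : x ∈ b := (Finset.mem_filter.mp (Finset.mem_coe.mp hb)).2.1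
        have := congrArg (insert x) hab
        simpa [Finset.insert_erase hxa, Finset.insert_erase hxb] using this
      have hcardeq : Fx.card = (F.filter (fun e => x ∈ e ∧ e ≠ ({x} : Finset V))).card :=
        Finset.card_image_of_injOn hinj
      rw [← hcardeq]
      apply ih
      · intro f hf
        obtain ⟨e, he, rfl⟩ := Finset.mem_image.mp hf
        obtain ⟨heF, hxe, hne'⟩ := Finset.mem_filter.mp he
        rw [Finset.nonempty_iff_ne_empty]
        intro hemp
        apply hne'
        apply Finset.Subset.antisymm
        · intro y hy
          rw [Finset.mem_singleton]
          by_contra hyx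
          exact (Finset.eq_empty_iff_forall_notMem.mp hemp y) (Finset.mem_erase.mpr ⟨hyx, hy⟩)
        · exact Finset.singleton_subset_iff.mpr hxe
      · intro f hf
        obtain ⟨e, he, rfl⟩ := Finset.mem_image.mp hf
        obtain ⟨heF, hxe, -⟩ := Finset.mem_filter.mp he
        have := Finset.card_erase_of_mem hxe
        have := hcard e heF
        omega
      · intro S' hS' C hsun
        rcases S'.eq_empty_or_nonempty with rfl | ⟨p0, hp0⟩
        · simp
        have hxnot : ∀ f ∈ S', x ∉ f := by
          intro f hf
          obtain ⟨e, he, rfl⟩ := Finset.mem_image.mp (hS' hf)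
          exact Finset.notMem_erase x e
        set S := S'.image (insert x) with hSdef
        have hScard : S.card = S'.card := Finset.card_image_of_injOn (by
          intro a ha b hb hab
          have h1 : (insert x a).erase x = (insert x b).erase x := by
            simpa using congrArg (fun s => Finset.erase s x) hab
          rwa [Finset.erase_insert (hxnot a (Finset.mem_coe.mp ha)),
            Finset.erase_insert (hxnot b (Finset.mem_coe.mp hb))] at h1)
        have hSF : S ⊆ F := by
          intro g hg
          obtain ⟨f, hf, rfl⟩ := Finset.mem_image.mp hg
          obtain ⟨e, he, hfe⟩ := Finset.mem_image.mp (hS' hf)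
          have hx : x ∈ e := (Finset.mem_filter.mp he).2.1
          rw [← hfe]
          show insert x (e.erase x) ∈ F
          rw [Finset.insert_erase hx]
          exact (Finset.mem_filter.mp he).1
        have hsun2 : IsSunflower S (insert x C) := by
          constructor
          · intro p hp
            obtain ⟨f, hf, rfl⟩ := Finset.mem_image.mp hp
            have hCf : C ⊂ f := hsun.1 f hf
            have hsub : insert x C ⊆ insert x f := Finset.insert_subset_insert x hCf.subset
            obtain ⟨y, hyf, hyC⟩ := Finset.exists_of_ssubset hCf
            refine (Finset.ssubset_iff_of_subset hsub).mpr
              ⟨y, Finset.mem_insert_of_mem hyf, ?_⟩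
            rw [Finset.mem_insert]
            push_neg
            exact ⟨fun h => hxnot f hf (h ▸ hyf), hyC⟩
          · intro p hp q hq hpq
            obtain ⟨f, hf, rfl⟩ := Finset.mem_image.mp hp
            obtain ⟨g, hg, rfl⟩ := Finset.mem_image.mp hq
            have hfg : f ≠ g := fun h => hpq (by rw [h])
            have hC : f ∩ g = C := hsun.2 f hf g hg hfg
            ext y
            simp only [Finset.mem_inter, Finset.mem_insert, ← hC]
            tauto
        have := hsf S hSF (insert x C) hsun2
        omega
    -- counting
    have hsplit : (F.filter (fun e => e.card = 1)).card
        + (F.filter (fun e => ¬ e.card = 1)).card = F.card :=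
      Finset.card_filter_add_card_filter_not _
    have hFbig : (F.filter (fun e => ¬ e.card = 1))
        ⊆ A.biUnion (fun x => F.filter (fun e => x ∈ e ∧ e ≠ ({x} : Finset V))) := by
      intro e he
      obtain ⟨heF, hec⟩ := Finset.mem_filter.mp he
      obtain ⟨x, hx⟩ := hhitA e heF
      obtain ⟨hxe, hxA⟩ := Finset.mem_inter.mp hx
      refine Finset.mem_biUnion.mpr ⟨x, hxA, Finset.mem_filter.mpr ⟨heF, hxe, ?_⟩⟩
      intro h
      apply hec
      rw [h]
      simp
    have hFbigcard : (F.filter (fun e => ¬ e.card = 1)).card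
        ≤ A.card * (k ^ n * n.factorial) := by
      calc (F.filter (fun e => ¬ e.card = 1)).card
          ≤ (A.biUnion (fun x => F.filter (fun e => x ∈ e ∧ e ≠ ({x} : Finset V)))).card :=
            Finset.card_le_card hFbig
        _ ≤ ∑ x ∈ A, (F.filter (fun e => x ∈ e ∧ e ≠ ({x} : Finset V))).card :=
            Finset.card_biUnion_le
        _ ≤ ∑ _x ∈ A, (k ^ n * n.factorial) := Finset.sum_le_sum hxbound
        _ = A.card * (k ^ n * n.factorial) := by rw [Finset.sum_const, smul_eq_mul]
    -- final arithmetic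
    obtain ⟨t, ht⟩ := Nat.exists_eq_add_of_le hSingk
    set s := Sing.card with hsdef
    set B := k ^ n * n.factorial with hBdef
    have hB1 : 1 ≤ B := Nat.mul_pos (Nat.pow_pos hk) n.factorial_pos
    have hts : k - s = t := by omega
    have hgoal : k ^ (n + 1) * (n + 1).factorial = (s + t) * ((n + 1) * B) := by
      rw [← ht, pow_succ, Nat.factorial_succ, hBdef]
      ring
    rw [hgoal]
    have h10 : (F.filter (fun e => ¬ e.card = 1)).card ≤ (s + t * (n + 1)) * B := by
      refine hFbigcard.trans (Nat.mul_le_mul_right B ?_)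
      rw [← hts]
      exact hAcard
    have h12 : 1 + B ≤ (n + 1) * B := by
      calc 1 + B ≤ B + B := add_le_add_left hB1 B
        _ ≤ n * B + B := add_le_add_left (Nat.le_mul_of_pos_left B hn) B
        _ = (n + 1) * B := by ring
    have h13 : s + s * B ≤ s * ((n + 1) * B) := by
      calc s + s * B = s * (1 + B) := by ring
        _ ≤ s * ((n + 1) * B) := Nat.mul_le_mul_left s h12
    calc F.card = s + (F.filter (fun e => ¬ e.card = 1)).card := by omega
      _ ≤ s + (s + t * (n + 1)) * B := add_le_add_right h10 s
      _ = (s + s * B) + t * ((n + 1) * B) := by ring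
      _ ≤ s * ((n + 1) * B) + t * ((n + 1) * B) := add_le_add_left h13 _
      _ = (s + t) * ((n + 1) * B) := by ring

/-- **Kernel Theorem (size part).** For a matryoshka sequence `(M 0, …, M d)` for
`H = M 0` and `k`, the kernel `K = (M 0 ⊖ M 1) ∪ … ∪ (M (d-1) ⊖ M d) ∪ M d`
has at most `∑_{i=0}^{d} k^i · i!` hyperedges. -/
theorem kernel_theorem_size {V : Type*} [DecidableEq V]
    (M : ℕ → Finset (Finset V)) (d k : ℕ)
    (hsize : ∀ i ≤ d, ∀ e ∈ M i, e.card ≤ d - i)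
    (hcores : ∀ i < d, ∀ C : Finset V,
      (∃ S : Finset (Finset V), S ⊆ M i ∧ k < S.card ∧ IsSunflower S C) → C ∈ M (i + 1))
    (hhit : ∀ i ≤ d, ∀ X : Finset V, X.card ≤ k → HitsAllF X (M 0) → HitsAllF X (M i)) :
    (((Finset.range d).biUnion fun i => OminusF (M i) (M (i + 1))) ∪ M d).card ≤
      ∑ i ∈ Finset.range (d + 1), k ^ i * Nat.factorial i := by
  classical
  have hbound : ∀ i < d, ((OminusF (M i) (M (i + 1))).erase ∅).card
      ≤ k ^ (d - i) * (d - i).factorial := by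
    intro i hi
    apply sunflower_free_card_le
    · intro e he
      exact Finset.nonempty_iff_ne_empty.mpr (Finset.ne_of_mem_erase he)
    · intro e he
      have heM : e ∈ M i := (Finset.mem_filter.mp (Finset.mem_of_mem_erase he)).1
      exact hsize i (le_of_lt hi) e heM
    · intro S hS C hsun
      by_contra h
      push_neg at h
      have hSM : S ⊆ M i := fun x hx =>
        (Finset.mem_filter.mp (Finset.mem_of_mem_erase (hS hx))).1
      have hC : C ∈ M (i + 1) := hcores i hi C ⟨S, hSM, h, hsun⟩
      obtain ⟨p, hp⟩ : S.Nonempty := Finset.card_pos.mp (by omega)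
      have hpO : p ∈ OminusF (M i) (M (i + 1)) := Finset.mem_of_mem_erase (hS hp)
      exact (Finset.mem_filter.mp hpO).2 C hC (hsun.1 p hp).subset
  set B := (Finset.range d).biUnion (fun i => (OminusF (M i) (M (i + 1))).erase ∅) with hBdef
  have hKsub : (((Finset.range d).biUnion fun i => OminusF (M i) (M (i + 1))) ∪ M d)
      ⊆ insert ∅ B := by
    intro e he
    rcases Finset.mem_union.mp he with h | h
    · obtain ⟨i, hi, hei⟩ := Finset.mem_biUnion.mp h
      by_cases h0 : e = ∅
      · simp [h0]
      · exact Finset.mem_insert_of_mem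
          (Finset.mem_biUnion.mpr ⟨i, hi, Finset.mem_erase.mpr ⟨h0, hei⟩⟩)
    · have h1 : e.card ≤ 0 := by simpa using hsize d le_rfl e h
      have h2 : e = ∅ := Finset.card_eq_zero.mp (Nat.le_zero.mp h1)
      simp [h2]
  have hsum : ∑ i ∈ Finset.range d, k ^ (d - i) * (d - i).factorial
      = ∑ i ∈ Finset.range d, k ^ (i + 1) * (i + 1).factorial := by
    rw [← Finset.sum_range_reflect (fun i => k ^ (i + 1) * (i + 1).factorial) d]
    apply Finset.sum_congr rfl
    intro i hi
    have h1 : d - 1 - i + 1 = d - i := by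
      have := Finset.mem_range.mp hi
      omega
    rw [h1]
  calc (((Finset.range d).biUnion fun i => OminusF (M i) (M (i + 1))) ∪ M d).card
      ≤ (insert ∅ B).card := Finset.card_le_card hKsub
    _ ≤ B.card + 1 := Finset.card_insert_le _ _
    _ ≤ (∑ i ∈ Finset.range d, k ^ (d - i) * (d - i).factorial) + 1 := by
        refine add_le_add_left (Finset.card_biUnion_le.trans ?_) 1
        exact Finset.sum_le_sum (fun i hi => hbound i (Finset.mem_range.mp hi))
    _ = ∑ i ∈ Finset.range (d + 1), k ^ i * Nat.factorial i := by
        rw [hsum, Finset.sum_range_succ']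
        simp
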